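/- For any set system D = ([n], F) and any element i ∈ [n], the operations twist * i and loop complementation + i satisfy the braid-type relation: applying the sequence * i, + i, * i, + i, * i, + i (i.e., (*+) three times on element i) returns D, so that * i and + i generate a group isomorphic to the symmetric group S₃. -/

import Mathlib

open scoped symmDiff

def twist {n : ℕ} (F : Finset (Finset (Fin n))) (i : Fin n) : Finset (Finset (Fin n)) :=
  F.image (fun X => X ∆ ({i} : Finset (Fin n)))

def loopComp {n : ℕ} (F : Finset (Finset (Fin n))) (i : Fin n) : Finset (Finset (Fin n)) :=
  F ∆ ((F.filter (fun I => i ∉ I)).image (fun I => insert i I))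

lemma mem_twist {n : ℕ} (F : Finset (Finset (Fin n))) (i : Fin n) (Y : Finset (Fin n)) :
    Y ∈ twist F i ↔ Y ∆ ({i} : Finset (Fin n)) ∈ F := by
  classical
  simp only [twist, Finset.mem_image]
  constructor
  · rintro ⟨X, hX, rfl⟩
    simpa [symmDiff_symmDiff_cancel_right] using hX
  · intro h
    exact ⟨Y ∆ {i}, h, by simp [symmDiff_symmDiff_cancel_right]⟩

lemma symmDiff_singleton_of_mem {n : ℕ} {i : Fin n} {Y : Finset (Fin n)} (h : i ∈ Y) :
    Y ∆ ({i} : Finset (Fin n)) = Y.erase i := by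
  ext x
  by_cases hx : x = i <;> simp [Finset.mem_symmDiff, hx, h]

lemma symmDiff_singleton_of_not_mem {n : ℕ} {i : Fin n} {Y : Finset (Fin n)} (h : i ∉ Y) :
    Y ∆ ({i} : Finset (Fin n)) = insert i Y := by
  ext x
  by_cases hx : x = i <;> simp [Finset.mem_symmDiff, hx, h]

lemma mem_loopComp {n : ℕ} (F : Finset (Finset (Fin n))) (i : Fin n) (Y : Finset (Fin n)) :
    Y ∈ loopComp F i ↔ Xor' (Y ∈ F) (i ∈ Y ∧ Y.erase i ∈ F) := by
  classical
  have hS : Y ∈ (F.filter (fun I => i ∉ I)).image (fun I => insert i I) ↔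
      i ∈ Y ∧ Y.erase i ∈ F := by
    simp only [Finset.mem_image, Finset.mem_filter]
    constructor
    · rintro ⟨X, ⟨hX, hiX⟩, rfl⟩
      exact ⟨Finset.mem_insert_self _ _, by rwa [Finset.erase_insert hiX]⟩
    · rintro ⟨hiY, hY⟩
      exact ⟨Y.erase i, ⟨hY, Finset.notMem_erase _ _⟩, Finset.insert_erase hiY⟩
  rw [loopComp, Finset.mem_symmDiff]
  rw [hS]
  unfold Xor' Xor
  tauto

lemma step_not_mem {n : ℕ} (F : Finset (Finset (Fin n))) (i : Fin n) (X : Finset (Fin n))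
    (hX : i ∉ X) : (X ∈ loopComp (twist F i) i ↔ insert i X ∈ F) := by
  rw [mem_loopComp, mem_twist, symmDiff_singleton_of_not_mem hX]
  unfold Xor' Xor
  tauto

lemma step_mem {n : ℕ} (F : Finset (Finset (Fin n))) (i : Fin n) (X : Finset (Fin n))
    (hX : i ∉ X) :
    (insert i X ∈ loopComp (twist F i) i ↔ Xor' (X ∈ F) (insert i X ∈ F)) := by
  rw [mem_loopComp, mem_twist, symmDiff_singleton_of_mem (Finset.mem_insert_self i X),
    Finset.erase_insert hX, mem_twist, symmDiff_singleton_of_not_mem hX]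
  simp only [Finset.mem_insert_self, true_and]

/-- The braid-type relation `(∗+)³ = id` on a single element: applying
`∗ i, + i, ∗ i, + i, ∗ i, + i` in sequence returns the original set system. -/
theorem braid_relation {n : ℕ} (F : Finset (Finset (Fin n))) (i : Fin n) :
    loopComp (twist (loopComp (twist (loopComp (twist F i) i) i) i) i) i = F := by
  classical
  ext Y
  by_cases hY : i ∈ Y
  · obtain ⟨X, hX, rfl⟩ : ∃ X, i ∉ X ∧ Y = insert i X :=
      ⟨Y.erase i, Finset.notMem_erase _ _, (Finset.insert_erase hY).symm⟩
    simp only [step_mem _ _ _ hX, step_not_mem _ _ _ hX, Xor', Xor]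
    tauto
  · simp only [step_not_mem _ _ _ hY, step_mem _ _ _ hY, Xor', Xor]
    tauto
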